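/- arXiv:2502.16811 — 3 statements merged into one kernel-verified Lean document; each statement's English description precedes it below -/
import Mathlib

section
/- Let H be a real inner product space, let a < b be real numbers, ε > 0, σ ≥ 0, let f : ℝ → H be differentiable on [a, b] with f(a) = 0, and let M : ℝ → ℝ be continuous and nonnegative on [a, b]. If ε⟨f'(t), f(t)⟩ + σ‖f(t)‖² ≤ M(t)‖f(t)‖ for all t ∈ [a, b], then ‖f(t)‖ ≤ (1/ε) ∫ₐᵗ M(θ) dθ for all t ∈ [a, b]. -/
open RealInnerProductSpace

/-- Differential-inequality argument from the proof of Lemma 3.4.6: if `f(a) = 0` and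
`ε⟨f'(t), f(t)⟩ + σ‖f(t)‖² ≤ M(t)‖f(t)‖` on `[a, b]` with `M` continuous and nonnegative,
then `‖f(t)‖ ≤ (1/ε) ∫ₐᵗ M(θ) dθ` on `[a, b]`. -/
theorem stmt_7 {H : Type*} [NormedAddCommGroup H] [InnerProductSpace ℝ H]
    (a b : ℝ) (hab : a < b) (ε σ : ℝ) (hε : 0 < ε) (hσ : 0 ≤ σ)
    (f : ℝ → H) (f' : ℝ → H)
    (hf : ∀ t ∈ Set.Icc a b, HasDerivWithinAt f (f' t) (Set.Icc a b) t)
    (hfa : f a = 0)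
    (M : ℝ → ℝ) (hMcont : ContinuousOn M (Set.Icc a b))
    (hMpos : ∀ t ∈ Set.Icc a b, 0 ≤ M t)
    (hineq : ∀ t ∈ Set.Icc a b,
      ε * ⟪f' t, f t⟫ + σ * ‖f t‖ ^ 2 ≤ M t * ‖f t‖) :
    ∀ t ∈ Set.Icc a b, ‖f t‖ ≤ (1 / ε) * ∫ θ in a..t, M θ := by
  intro t ht
  set g : ℝ → ℝ := fun t => (1 / ε) * ∫ θ in a..t, M θ with hg
  -- integrability of M
  have hMint : MeasureTheory.IntegrableOn M (Set.uIcc a b) MeasureTheory.volume := by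
    rw [Set.uIcc_of_le hab.le]
    exact hMcont.integrableOn_Icc
  have hgcont : ContinuousOn g (Set.Icc a b) := by
    have := (intervalIntegral.continuousOn_primitive_interval hMint).const_smul (1 / ε)
    rw [Set.uIcc_of_le hab.le] at this
    simpa [hg, Pi.smul_def, smul_eq_mul] using this
  have hfc : ContinuousOn f (Set.Icc a b) := fun s hs => (hf s hs).continuousWithinAt
  -- It suffices to prove ‖f t‖ ≤ g t + δ for all δ > 0
  refine le_of_forall_pos_le_add ?_
  intro δ hδ
  set w : ℝ → ℝ := fun s => Real.sqrt (‖f s‖ ^ 2 + δ ^ 2) with hw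
  have hwpos : ∀ s, (0:ℝ) < ‖f s‖ ^ 2 + δ ^ 2 := fun s => by positivity
  -- h = w - g is antitone on Icc a b
  have hanti : AntitoneOn (fun s => w s - g s) (Set.Icc a b) := by
    apply antitoneOn_of_hasDerivWithinAt_nonpos (convex_Icc a b)
      (f' := fun s => (⟪f s, f' s⟫ + ⟪f' s, f s⟫) / (2 * Real.sqrt (‖f s‖ ^ 2 + δ ^ 2)) - (1/ε) * M s)
    · exact (Real.continuous_sqrt.comp_continuousOn
        ((hfc.norm.pow 2).add continuousOn_const)).sub hgcont
    · intro x hx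
      rw [interior_Icc] at hx
      have hx' : x ∈ Set.Icc a b := Set.mem_Icc_of_Ioo hx
      have hnhds : Set.Icc a b ∈ nhds x := Icc_mem_nhds hx.1 hx.2
      have hfx : HasDerivAt f (f' x) x := (hf x hx').hasDerivAt hnhds
      have hsq : HasDerivAt (fun s => ‖f s‖ ^ 2 + δ ^ 2)
          (⟪f x, f' x⟫ + ⟪f' x, f x⟫) x := by
        have := (hfx.inner ℝ hfx).add_const (δ ^ 2)
        simpa [real_inner_self_eq_norm_sq] using this
      have hwx : HasDerivAt w
          ((⟪f x, f' x⟫ + ⟪f' x, f x⟫) / (2 * Real.sqrt (‖f x‖ ^ 2 + δ ^ 2))) x :=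
        hsq.sqrt (hwpos x).ne'
      have hgx : HasDerivAt g ((1/ε) * M x) x := by
        have hint : IntervalIntegrable M MeasureTheory.volume a x :=
          (hMcont.mono (Set.Icc_subset_Icc le_rfl hx'.2)).intervalIntegrable_of_Icc hx'.1
        have hcx : ContinuousAt M x := (hMcont x hx').continuousAt hnhds
        have hms : StronglyMeasurableAtFilter M (nhds x) MeasureTheory.volume :=
          (hMcont.mono Set.Ioo_subset_Icc_self).stronglyMeasurableAtFilter isOpen_Ioo x hx
        exact ((intervalIntegral.integral_hasDerivAt_right hint hms hcx).const_mul (1/ε))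
      exact ((hwx.sub hgx).hasDerivWithinAt).mono interior_subset
    · intro x hx
      rw [interior_Icc] at hx
      have hx' : x ∈ Set.Icc a b := Set.mem_Icc_of_Ioo hx
      have hsqrt_pos : (0:ℝ) < Real.sqrt (‖f x‖ ^ 2 + δ ^ 2) :=
        Real.sqrt_pos.2 (hwpos x)
      have h1 : ⟪f x, f' x⟫ + ⟪f' x, f x⟫ = 2 * ⟪f' x, f x⟫ := by
        rw [real_inner_comm]; ring
      have h2 : ε * ⟪f' x, f x⟫ ≤ M x * ‖f x‖ := by
        have := hineq x hx'
        nlinarith [sq_nonneg (‖f x‖), hσ]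
      have h3 : ⟪f' x, f x⟫ ≤ (1/ε) * (M x * ‖f x‖) := by
        rw [div_mul_eq_mul_div, one_mul, le_div_iff₀ hε]
        nlinarith [h2]
      have hnorm_le : ‖f x‖ ≤ Real.sqrt (‖f x‖ ^ 2 + δ ^ 2) := by
        have h0 : Real.sqrt (‖f x‖ ^ 2) ≤ Real.sqrt (‖f x‖ ^ 2 + δ ^ 2) :=
          Real.sqrt_le_sqrt (by nlinarith)
        rwa [Real.sqrt_sq (norm_nonneg _)] at h0
      rw [h1, sub_nonpos]
      rw [div_le_iff₀ (by positivity)]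
      have hM0 := hMpos x hx'
      calc 2 * ⟪f' x, f x⟫ ≤ 2 * ((1/ε) * (M x * ‖f x‖)) := by linarith
        _ ≤ 2 * ((1/ε) * (M x * Real.sqrt (‖f x‖ ^ 2 + δ ^ 2))) := by
            have : M x * ‖f x‖ ≤ M x * Real.sqrt (‖f x‖ ^ 2 + δ ^ 2) :=
              mul_le_mul_of_nonneg_left hnorm_le hM0
            have h1e : (0:ℝ) ≤ 1/ε := by positivity
            nlinarith
        _ = 1 / ε * M x * (2 * Real.sqrt (‖f x‖ ^ 2 + δ ^ 2)) := by ring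
  -- evaluate at a and t
  have hmem_a : a ∈ Set.Icc a b := Set.left_mem_Icc.2 hab.le
  have hkey := hanti hmem_a ht ht.1
  have hwa : w a = δ := by
    simp [hw, hfa, Real.sqrt_sq hδ.le]
  have hga : g a = 0 := by simp [hg]
  have hnt : ‖f t‖ ≤ w t := by
    have h0 : Real.sqrt (‖f t‖ ^ 2) ≤ Real.sqrt (‖f t‖ ^ 2 + δ ^ 2) :=
      Real.sqrt_le_sqrt (by nlinarith)
    rwa [Real.sqrt_sq (norm_nonneg _)] at h0
  have hkey' : w t - g t ≤ w a - g a := hkey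
  rw [hwa, hga] at hkey'
  show ‖f t‖ ≤ g t + δ
  linarith
end

section
/- Let H be a real Banach space, let a < b be real numbers and set τ = b − a. Let f : ℝ → H be twice differentiable on [a, b] with f'' continuous on [a, b]. Then ‖(f(b) − f(a))/τ − f'(b)‖² ≤ (τ/3) ∫ₐᵇ ‖f''(θ)‖² dθ. -/
/-- Consistency error of the backward difference quotient (proof of Theorem 3.5.3):
if `f` is twice differentiable on `[a, b]` with continuous second derivative and
`τ = b − a`, then `‖(f(b) − f(a))/τ − f'(b)‖² ≤ (τ/3) ∫ₐᵇ ‖f''(θ)‖² dθ`. -/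
theorem stmt_8 {H : Type*} [NormedAddCommGroup H] [NormedSpace ℝ H] [CompleteSpace H]
    (a b : ℝ) (hab : a < b) (τ : ℝ) (hτ : τ = b - a)
    (f f' f'' : ℝ → H)
    (hf : ∀ t ∈ Set.Icc a b, HasDerivWithinAt f (f' t) (Set.Icc a b) t)
    (hf' : ∀ t ∈ Set.Icc a b, HasDerivWithinAt f' (f'' t) (Set.Icc a b) t)
    (hf'' : ContinuousOn f'' (Set.Icc a b)) :
    ‖τ⁻¹ • (f b - f a) - f' b‖ ^ 2 ≤ (τ / 3) * ∫ θ in a..b, ‖f'' θ‖ ^ 2 := by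
  have hab' : a ≤ b := hab.le
  have hτ0 : 0 < τ := by rw [hτ]; linarith
  have hfc : ContinuousOn f (Set.Icc a b) := fun t ht => (hf t ht).continuousWithinAt
  have hf'c : ContinuousOn f' (Set.Icc a b) := fun t ht => (hf' t ht).continuousWithinAt
  set F : ℝ → H := fun θ => (θ - a) • f' θ - f θ with hF
  set g : ℝ → H := fun θ => (θ - a) • f'' θ with hg
  -- F has derivative g within Icc
  have hFd : ∀ t ∈ Set.Icc a b, HasDerivWithinAt F (g t) (Set.Icc a b) t := by
    intro t ht
    have h1 : HasDerivWithinAt (fun θ : ℝ => θ - a) 1 (Set.Icc a b) t :=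
      ((hasDerivWithinAt_id t _).sub_const a)
    have h2 := (h1.smul (hf' t ht)).sub (hf t ht)
    convert h2 using 1
    · rfl
    · simp [hg]
  have hgc : ContinuousOn g (Set.Icc a b) :=
    (continuousOn_id.sub continuousOn_const).smul hf''
  have hgint : IntervalIntegrable g MeasureTheory.volume a b := by
    apply ContinuousOn.intervalIntegrable
    rwa [Set.uIcc_of_le hab']
  have hFc : ContinuousOn F (Set.Icc a b) :=
    (((continuousOn_id.sub continuousOn_const).smul hf'c).sub hfc)
  have key : (∫ θ in a..b, g θ) = F b - F a := by
    apply intervalIntegral.integral_eq_sub_of_hasDeriv_right_of_le hab' hFc _ hgint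
    intro x hx
    have hmem : Set.Icc a b ∈ nhds x := Icc_mem_nhds hx.1 hx.2
    exact ((hFd x (Set.Ioo_subset_Icc_self hx)).hasDerivAt hmem).hasDerivWithinAt
  have keyF : F b - F a = τ • f' b - (f b - f a) := by
    simp only [hF, hτ, sub_self, zero_smul, zero_sub]
    abel
  -- rewrite the LHS
  have hrepr : τ⁻¹ • (f b - f a) - f' b = -(τ⁻¹ • ∫ θ in a..b, g θ) := by
    rw [key, keyF]
    simp only [smul_sub, smul_smul, inv_mul_cancel₀ hτ0.ne', one_smul, neg_sub]
  rw [hrepr, norm_neg, norm_smul, Real.norm_eq_abs, abs_of_pos (inv_pos.mpr hτ0)]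
  -- bound the norm of the integral
  have hnorm : ‖∫ θ in a..b, g θ‖ ≤ ∫ θ in a..b, (θ - a) * ‖f'' θ‖ := by
    refine (intervalIntegral.norm_integral_le_integral_norm hab').trans_eq ?_
    apply intervalIntegral.integral_congr
    intro θ hθ
    rw [Set.uIcc_of_le hab'] at hθ
    simp only [hg, norm_smul, Real.norm_eq_abs, abs_of_nonneg (sub_nonneg.mpr hθ.1)]
  -- Cauchy-Schwarz
  set μ := MeasureTheory.volume.restrict (Set.Ioc a b) with hμ
  have hfin : MeasureTheory.IsFiniteMeasure μ := by
    constructor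
    rw [hμ, MeasureTheory.Measure.restrict_apply_univ, Real.volume_Ioc]
    exact ENNReal.ofReal_lt_top
  have hpq : Real.HolderConjugate 2 2 := Real.HolderConjugate.two_two
  set u : ℝ → ℝ := fun θ => θ - a with hu
  set v : ℝ → ℝ := fun θ => ‖f'' θ‖ with hv
  have humem : MeasureTheory.MemLp u (ENNReal.ofReal 2) μ := by
    apply MeasureTheory.MemLp.of_bound
      ((continuous_id.sub continuous_const).aestronglyMeasurable) (|b - a| + |a|)
    filter_upwards [MeasureTheory.ae_restrict_mem measurableSet_Ioc] with θ hθ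
    have : |θ - a| ≤ |b - a| := by
      rw [abs_of_nonneg (sub_nonneg.mpr hθ.1.le), abs_of_nonneg (sub_nonneg.mpr hab')]
      linarith [hθ.2]
    simp only [hu, Real.norm_eq_abs, id_eq, Pi.sub_apply]
    linarith [abs_nonneg a]
  have hvmem : MeasureTheory.MemLp v (ENNReal.ofReal 2) μ := by
    obtain ⟨C, hC⟩ := (isCompact_Icc.exists_bound_of_continuousOn hf'')
    apply MeasureTheory.MemLp.of_bound _ C
    · filter_upwards [MeasureTheory.ae_restrict_mem measurableSet_Ioc] with θ hθ
      have := hC θ (Set.Ioc_subset_Icc_self hθ)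
      simpa [hv] using (norm_norm (f'' θ) ▸ this)
    · exact ((hf''.norm).mono Set.Ioc_subset_Icc_self).aestronglyMeasurable measurableSet_Ioc
  have hunn : 0 ≤ᵐ[μ] u := by
    filter_upwards [MeasureTheory.ae_restrict_mem measurableSet_Ioc] with θ hθ
    exact sub_nonneg.mpr hθ.1.le
  have hvnn : 0 ≤ᵐ[μ] v := by
    filter_upwards with θ; exact norm_nonneg _
  have hCS := MeasureTheory.integral_mul_le_Lp_mul_Lq_of_nonneg hpq hunn hvnn humem hvmem
  -- translate rpow to pow
  have hu2 : (∫ θ, u θ ^ (2:ℝ) ∂μ) = ∫ θ in a..b, (θ - a) ^ 2 := by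
    rw [intervalIntegral.integral_of_le hab']
    apply MeasureTheory.integral_congr_ae
    filter_upwards [MeasureTheory.ae_restrict_mem measurableSet_Ioc] with θ hθ
    rw [hu, show (2:ℝ) = ((2:ℕ):ℝ) by norm_num, Real.rpow_natCast]
  have hv2 : (∫ θ, v θ ^ (2:ℝ) ∂μ) = ∫ θ in a..b, ‖f'' θ‖ ^ 2 := by
    rw [intervalIntegral.integral_of_le hab']
    apply MeasureTheory.integral_congr_ae
    filter_upwards with θ
    rw [hv, show (2:ℝ) = ((2:ℕ):ℝ) by norm_num, Real.rpow_natCast]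
  have huv : (∫ θ, u θ * v θ ∂μ) = ∫ θ in a..b, (θ - a) * ‖f'' θ‖ := by
    rw [intervalIntegral.integral_of_le hab']
  rw [huv, hu2, hv2] at hCS
  -- compute ∫ (θ-a)^2 = τ^3/3
  have hA : (∫ θ in a..b, (θ - a) ^ 2) = τ ^ 3 / 3 := by
    have := intervalIntegral.integral_comp_sub_right (fun x => x ^ 2) a (a := a) (b := b)
    rw [this, integral_pow, hτ]
    norm_num
  have hB0 : 0 ≤ ∫ θ in a..b, ‖f'' θ‖ ^ 2 := by
    apply intervalIntegral.integral_nonneg hab'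
    intro θ _; positivity
  have hA0 : (0:ℝ) ≤ τ ^ 3 / 3 := by positivity
  -- square the CS inequality
  have hCS2 : (∫ θ in a..b, (θ - a) * ‖f'' θ‖) ^ 2
      ≤ (τ ^ 3 / 3) * ∫ θ in a..b, ‖f'' θ‖ ^ 2 := by
    have hR : ((∫ θ in a..b, (θ-a)^2) ^ ((1:ℝ)/2) * (∫ θ in a..b, ‖f'' θ‖^2) ^ ((1:ℝ)/2)) ^ 2
        = (τ ^ 3 / 3) * ∫ θ in a..b, ‖f'' θ‖ ^ 2 := by
      rw [mul_pow, ← Real.rpow_natCast (_ ^ ((1:ℝ)/2)) 2, ← Real.rpow_natCast (_ ^ ((1:ℝ)/2)) 2,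
        ← Real.rpow_mul (hA ▸ hA0), ← Real.rpow_mul hB0]
      norm_num [hA]
    rw [← hR]
    apply pow_le_pow_left₀ _ hCS
    apply intervalIntegral.integral_nonneg hab'
    intro θ hθ
    exact mul_nonneg (sub_nonneg.mpr hθ.1) (norm_nonneg _)
  -- combine
  have h1 : (τ⁻¹ * ‖∫ θ in a..b, g θ‖) ^ 2 ≤ τ⁻¹ ^ 2 * ((τ ^ 3 / 3) * ∫ θ in a..b, ‖f'' θ‖ ^ 2) := by
    rw [mul_pow]
    apply mul_le_mul_of_nonneg_left _ (by positivity)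
    calc ‖∫ θ in a..b, g θ‖ ^ 2 ≤ (∫ θ in a..b, (θ - a) * ‖f'' θ‖) ^ 2 :=
          pow_le_pow_left₀ (norm_nonneg _) hnorm 2
      _ ≤ _ := hCS2
  refine h1.trans_eq ?_
  field_simp
end

section
/- Let V and Q be real inner product spaces and let V_h be a linear subspace of V. Let a : V × V → ℝ be a bilinear form and 0 < β₁ ≤ β₂ constants such that β₁‖v‖² ≤ a(v, v) for all v ∈ V and |a(w, v)| ≤ β₂‖w‖‖v‖ for all w, v ∈ V. Let b : V × Q → ℝ be a bilinear form with a constant γ ≥ 0 such that |b(v, q)| ≤ γ‖v‖‖q‖ for all v ∈ V, q ∈ Q. Suppose u ∈ V, p, r ∈ Q and u_h ∈ V_h satisfy a(u_h, v_h) − b(v_h, r) = a(u, v_h) − b(v_h, p) for all v_h ∈ V_h. Then for every w_h ∈ V_h, ‖u_h − w_h‖ ≤ (β₂/β₁)‖u − w_h‖ + (γ/β₁)‖r − p‖, and consequently ‖u_h − u‖ ≤ (1 + β₂/β₁)‖u − w_h‖ + (γ/β₁)‖r − p‖. -/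
/-- Céa-type estimate from the proof of Lemma 3.5.2: if `a` is coercive (`β₁`) and
bounded (`β₂`) on `V`, `b` is bounded (`γ`), and the Ritz projection identity
`a(u_h, v_h) − b(v_h, r) = a(u, v_h) − b(v_h, p)` holds for all `v_h` in the subspace
`V_h`, then for every `w_h ∈ V_h`,
`‖u_h − w_h‖ ≤ (β₂/β₁)‖u − w_h‖ + (γ/β₁)‖r − p‖` and
`‖u_h − u‖ ≤ (1 + β₂/β₁)‖u − w_h‖ + (γ/β₁)‖r − p‖`. -/
theorem stmt_10 {V Q : Type*}
    [NormedAddCommGroup V] [InnerProductSpace ℝ V]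
    [NormedAddCommGroup Q] [InnerProductSpace ℝ Q]
    (Vh : Submodule ℝ V)
    (a : V →ₗ[ℝ] V →ₗ[ℝ] ℝ) (β₁ β₂ : ℝ) (hβ₁ : 0 < β₁) (hβ₁₂ : β₁ ≤ β₂)
    (hcoer : ∀ v : V, β₁ * ‖v‖ ^ 2 ≤ a v v)
    (hbound : ∀ w v : V, |a w v| ≤ β₂ * ‖w‖ * ‖v‖)
    (b : V →ₗ[ℝ] Q →ₗ[ℝ] ℝ) (γ : ℝ) (hγ : 0 ≤ γ)
    (hbbound : ∀ (v : V) (q : Q), |b v q| ≤ γ * ‖v‖ * ‖q‖)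
    (u : V) (p r : Q) (uh : V) (huh : uh ∈ Vh)
    (hritz : ∀ vh ∈ Vh, a uh vh - b vh r = a u vh - b vh p) :
    ∀ wh ∈ Vh,
      ‖uh - wh‖ ≤ (β₂ / β₁) * ‖u - wh‖ + (γ / β₁) * ‖r - p‖ ∧
      ‖uh - u‖ ≤ (1 + β₂ / β₁) * ‖u - wh‖ + (γ / β₁) * ‖r - p‖ := by
  intro wh hwh
  set e := uh - wh with he
  have heVh : e ∈ Vh := Vh.sub_mem huh hwh
  have hβ₂ : 0 < β₂ := lt_of_lt_of_le hβ₁ hβ₁₂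
  have key : β₁ * ‖e‖ ^ 2 ≤ β₂ * ‖u - wh‖ * ‖e‖ + γ * ‖e‖ * ‖r - p‖ := by
    have h1 : (a e) e = a (u - wh) e + b e (r - p) := by
      have hr := hritz e heVh
      simp only [he, map_sub, LinearMap.sub_apply] at hr ⊢
      linarith
    calc β₁ * ‖e‖ ^ 2 ≤ a e e := hcoer e
      _ = a (u - wh) e + b e (r - p) := h1
      _ ≤ |a (u - wh) e| + |b e (r - p)| := by
          have h2 := le_abs_self (a (u - wh) e)
          have h3 := le_abs_self (b e (r - p))
          linarith
      _ ≤ β₂ * ‖u - wh‖ * ‖e‖ + γ * ‖e‖ * ‖r - p‖ :=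
          add_le_add (hbound _ _) (hbbound _ _)
  have hfirst : ‖e‖ ≤ (β₂ / β₁) * ‖u - wh‖ + (γ / β₁) * ‖r - p‖ := by
    rcases eq_or_lt_of_le (norm_nonneg e) with h0 | h0
    · rw [← h0]
      have h2 : 0 ≤ (β₂ / β₁) * ‖u - wh‖ :=
        mul_nonneg (div_nonneg hβ₂.le hβ₁.le) (norm_nonneg _)
      have h3 : 0 ≤ (γ / β₁) * ‖r - p‖ :=
        mul_nonneg (div_nonneg hγ hβ₁.le) (norm_nonneg _)
      linarith
    · have h1 : β₁ * ‖e‖ ≤ β₂ * ‖u - wh‖ + γ * ‖r - p‖ := by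
        nlinarith [key, h0]
      rw [div_mul_eq_mul_div, div_mul_eq_mul_div, ← add_div, le_div_iff₀ hβ₁]
      linarith
  refine ⟨hfirst, ?_⟩
  have htri : ‖uh - u‖ ≤ ‖e‖ + ‖u - wh‖ := by
    calc ‖uh - u‖ = ‖e - (u - wh)‖ := by rw [he]; congr 1; abel
      _ ≤ ‖e‖ + ‖u - wh‖ := norm_sub_le _ _
  linarith
end
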